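/- Let k ≥ 2 and let d, D be positive integers with k ≤ dD, and let C_k be the associated transfer matrix. Then μ₂ = (dD² − d)/(d²D² − 1) is an eigenvalue of C_k, and its algebraic multiplicity is at least k(k−1)/2 (the number of transpositions in S_k). -/

import Mathlib

open Equiv Matrix

/-- Number of cycles of a permutation, counting fixed points as 1-cycles. -/
noncomputable def cyc {k : ℕ} (π : Equiv.Perm (Fin k)) : ℕ :=
  (k - π.cycleType.sum) + Multiset.card π.cycleType

/-- Gram matrix `G(q)_{στ} = q^{#(στ⁻¹)}`. -/
noncomputable def Gram (k q : ℕ) :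
    Matrix (Equiv.Perm (Fin k)) (Equiv.Perm (Fin k)) ℝ :=
  Matrix.of fun σ τ => (q : ℝ) ^ cyc (σ * τ⁻¹)

/-- Weingarten matrix `W = G(q)⁻¹`, so that `Wg(στ⁻¹, q) = W σ τ`. -/
noncomputable def WgM (k q : ℕ) :
    Matrix (Equiv.Perm (Fin k)) (Equiv.Perm (Fin k)) ℝ :=
  (Gram k q)⁻¹

/-- Transfer matrix `⟨τ|C_k|θ⟩ = Σ_σ Wg(στ⁻¹, dD) d^{#(σ)} D^{#(σθ⁻¹)}`. -/
noncomputable def Ck (k d D : ℕ) :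
    Matrix (Equiv.Perm (Fin k)) (Equiv.Perm (Fin k)) ℝ :=
  Matrix.of fun τ θ =>
    ∑ σ : Equiv.Perm (Fin k),
      WgM k (d * D) σ τ * (d : ℝ) ^ cyc σ * (D : ℝ) ^ cyc (σ * θ⁻¹)

section Orbits
variable {α : Type*} [Fintype α] [DecidableEq α] {β : Type*}

private lemma inv_pow_apply {π : Equiv.Perm α} {f : α → β} (hf : ∀ z, f (π z) = f z)
    (n : ℕ) (z : α) : f ((π ^ n) z) = f z := by
  induction n with
  | zero => simp
  | succ n ih => rw [pow_succ', Equiv.Perm.mul_apply, hf (((π : Equiv.Perm α) ^ n) z)] <;> exact ih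

private lemma inv_const_on_sameCycle {π : Equiv.Perm α} {f : α → β} (hf : ∀ z, f (π z) = f z)
    {x y : α} (h : π.SameCycle x y) : f x = f y := by
  obtain ⟨i, -, hi⟩ := h.exists_pow_eq'
  rw [← hi, inv_pow_apply hf]

/-- Invariant functions correspond to functions on the set of cycles (orbits). -/
noncomputable def invFunEquiv (π : Equiv.Perm α) (β : Type*) :
    {f : α → β // ∀ z, f (π z) = f z} ≃ (Quotient (Equiv.Perm.SameCycle.setoid π) → β) where
  toFun f := Quotient.lift f.1 (fun _ _ h => inv_const_on_sameCycle f.2 h)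
  invFun g := ⟨fun a => g (Quotient.mk _ a), fun z => by
    refine congrArg g (Quotient.sound ?_)
    exact ⟨-1, by simp⟩⟩
  left_inv f := rfl
  right_inv g := by
    funext x
    induction x using Quotient.ind
    rfl

lemma invFunEquiv_apply (π : Equiv.Perm α) (f : {f : α → β // ∀ z, f (π z) = f z}) (a : α) :
    invFunEquiv π β f (Quotient.mk _ a) = f.1 a := rfl

/-- The number of cycles (orbits), counting fixed points. -/
lemma card_quot (π : Equiv.Perm α) :
    Nat.card (Quotient (Equiv.Perm.SameCycle.setoid π)) =
      (Fintype.card α - π.cycleType.sum) + Multiset.card π.cycleType := by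
  classical
  have e : Quotient (Equiv.Perm.SameCycle.setoid π) ≃
      ({x : α // π x = x} ⊕ {c : Equiv.Perm α // c ∈ π.cycleFactorsFinset}) := by
    set fn : α → ({x : α // π x = x} ⊕ {c : Equiv.Perm α // c ∈ π.cycleFactorsFinset}) :=
      fun a => if h : π a = a then Sum.inl ⟨a, h⟩ else Sum.inr ⟨π.cycleOf a,
        Equiv.Perm.cycleOf_mem_cycleFactorsFinset_iff.2 (Equiv.Perm.mem_support.2 h)⟩ with hfn
    have compat : ∀ a b : α, π.SameCycle a b → fn a = fn b := by
      intro a b hab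
      by_cases ha : π a = a
      · obtain rfl := hab.eq_of_left ha
        rfl
      · have hb : ¬ π b = b := by
          intro hb
          exact ha (hab.symm.eq_of_left hb ▸ hb)
        rw [hfn]
        simp only
        rw [dif_neg ha, dif_neg hb]
        exact congrArg _ (Subtype.ext (hab.cycleOf_eq))
    refine Equiv.ofBijective (Quotient.lift fn compat) ⟨?_, ?_⟩
    · rintro ⟨a⟩ ⟨b⟩ hab
      have hab' : fn a = fn b := hab
      rw [hfn] at hab'
      simp only at hab'
      by_cases ha : π a = a
      · by_cases hb : π b = b
        · rw [dif_pos ha, dif_pos hb] at hab'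
          have : a = b := by simpa using hab'
          subst this
          rfl
        · rw [dif_pos ha, dif_neg hb] at hab'
          exact absurd hab' (by simp)
      · by_cases hb : π b = b
        · rw [dif_neg ha, dif_pos hb] at hab'
          exact absurd hab' (by simp)
        · rw [dif_neg ha, dif_neg hb] at hab'
          have hc : π.cycleOf a = π.cycleOf b := by simpa using hab'
          refine Quotient.sound ?_
          have hbmem : b ∈ (π.cycleOf a).support := by
            rw [hc]
            exact Equiv.Perm.mem_support_cycleOf_iff.2 ⟨Equiv.Perm.SameCycle.refl π b,
              Equiv.Perm.mem_support.2 hb⟩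
          exact (Equiv.Perm.mem_support_cycleOf_iff.1 hbmem).1
    · rintro (⟨x, hx⟩ | ⟨c, hc⟩)
      · refine ⟨Quotient.mk _ x, ?_⟩
        show fn x = _
        rw [hfn]
        simp only
        rw [dif_pos hx]
      · have hcyc := (Equiv.Perm.mem_cycleFactorsFinset_iff.1 hc).1
        obtain ⟨x, hx⟩ := hcyc.nonempty_support
        have hxπ : π x ≠ x := by
          have := (Equiv.Perm.mem_cycleFactorsFinset_iff.1 hc).2 x hx
          intro h
          exact (Equiv.Perm.mem_support.1 hx) (this.trans h)
        refine ⟨Quotient.mk _ x, ?_⟩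
        show fn x = _
        rw [hfn]
        simp only
        rw [dif_neg hxπ]
        congr 1
        exact Subtype.ext (Equiv.Perm.cycle_is_cycleOf hx hc).symm
  rw [Nat.card_congr e]
  rw [Nat.card_eq_fintype_card, Fintype.card_sum]
  congr 1
  · rw [Equiv.Perm.sum_cycleType]
    have h2 : {x : α // π x = x} ≃ {x : α // x ∉ π.support} :=
      Equiv.subtypeEquivRight (by simp [Equiv.Perm.mem_support])
    rw [Fintype.card_congr h2, Fintype.card_subtype_compl]
    congr 1
    exact Fintype.card_coe _
  · rw [Equiv.Perm.cycleType_def, Multiset.card_map]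
    have := Fintype.card_coe π.cycleFactorsFinset
    simpa using this.symm

/-- Number of cycles (orbits) of a permutation, counting fixed points. -/
noncomputable def ncyc (π : Equiv.Perm α) : ℕ :=
  (Fintype.card α - π.cycleType.sum) + Multiset.card π.cycleType

lemma card_invFun (π : Equiv.Perm α) (β : Type*) [Fintype β] :
    Nat.card {f : α → β // ∀ z, f (π z) = f z} = Fintype.card β ^ ncyc π := by
  rw [Nat.card_congr (invFunEquiv π β), Nat.card_fun, Nat.card_eq_fintype_card, ncyc,
    ← card_quot π]

lemma lower_bound_card {Q γ : Type*} [Fintype Q] [DecidableEq Q] [Fintype γ] [Nonempty γ]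
    (u v : Q) :
    Fintype.card γ ^ (Fintype.card Q - 1) ≤ Nat.card {g : Q → γ // g u = g v} := by
  by_cases huv : u = v
  · subst huv
    have e : {g : Q → γ // g u = g u} ≃ (Q → γ) := Equiv.subtypeUnivEquiv (fun g => rfl)
    rw [Nat.card_congr e, Nat.card_fun, Nat.card_eq_fintype_card, Nat.card_eq_fintype_card]
    exact Nat.pow_le_pow_right Fintype.card_pos (Nat.sub_le _ _)
  · have hinj : Function.Injective (fun h : {z : Q // z ≠ v} → γ =>
        (⟨fun z => if hz : z = v then h ⟨u, huv⟩ else h ⟨z, hz⟩, by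
          simp [huv]⟩ : {g : Q → γ // g u = g v})) := by
      intro h1 h2 hh
      funext z
      have := congrArg (fun g : {g : Q → γ // g u = g v} => g.1 z.1) hh
      simpa [z.2] using this
    have := Nat.card_le_card_of_injective _ hinj
    rw [Nat.card_fun, Nat.card_eq_fintype_card, Nat.card_eq_fintype_card] at this
    have hcard : Fintype.card {z : Q // z ≠ v} = Fintype.card Q - 1 := by
      rw [Fintype.card_subtype_compl, Fintype.card_subtype_eq]
    rwa [hcard] at this

lemma inv_mul_swap {σ : Equiv.Perm α} {f : α → β} {x y : α}
    (hf : ∀ z, f (σ z) = f z) (hxy : f x = f y) :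
    ∀ z, f ((σ * Equiv.swap x y) z) = f z := by
  intro z
  rw [Equiv.Perm.mul_apply]
  by_cases hzx : z = x
  · subst hzx
    rw [Equiv.swap_apply_left, hf, ← hxy]
  by_cases hzy : z = y
  · subst hzy
    rw [Equiv.swap_apply_right, hf, hxy]
  · rw [Equiv.swap_apply_of_ne_of_ne hzx hzy, hf]

lemma ncyc_ne_mul_swap (σ : Equiv.Perm α) {x y : α} (hxy : x ≠ y) :
    ncyc (σ * Equiv.swap x y) ≠ ncyc σ := by
  intro h
  set τ := σ * Equiv.swap x y with hτ
  have hsign : Equiv.Perm.sign τ = - Equiv.Perm.sign σ := by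
    rw [hτ, Equiv.Perm.sign_mul, Equiv.Perm.sign_swap hxy, mul_neg_one]
  rw [Equiv.Perm.sign_of_cycleType, Equiv.Perm.sign_of_cycleType] at hsign
  have hsσ : σ.cycleType.sum ≤ Fintype.card α := by
    rw [Equiv.Perm.sum_cycleType, ← Finset.card_univ]
    exact Finset.card_le_univ _
  have hsτ : τ.cycleType.sum ≤ Fintype.card α := by
    rw [Equiv.Perm.sum_cycleType, ← Finset.card_univ]
    exact Finset.card_le_univ _
  rw [ncyc, ncyc] at h
  have hpar : (τ.cycleType.sum + Multiset.card τ.cycleType) % 2 =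
      (σ.cycleType.sum + Multiset.card σ.cycleType) % 2 := by omega
  set a := τ.cycleType.sum + Multiset.card τ.cycleType
  set b := σ.cycleType.sum + Multiset.card σ.cycleType
  rcases Nat.even_or_odd a with ha | ha
  · have hb : Even b := by
      rw [Nat.even_iff] at ha ⊢
      omega
    rw [ha.neg_one_pow, hb.neg_one_pow] at hsign
    exact absurd hsign (by decide)
  · have hb : Odd b := by
      rw [Nat.odd_iff] at ha ⊢
      omega
    rw [ha.neg_one_pow, hb.neg_one_pow] at hsign
    exact absurd hsign (by decide)

lemma ncyc_le_mul_swap (σ : Equiv.Perm α) {x y : α} (hxy : x ≠ y) :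
    ncyc σ ≤ ncyc (σ * Equiv.swap x y) + 1 := by
  classical
  set τ := σ * Equiv.swap x y with hτ
  haveI : Fintype (Quotient (Equiv.Perm.SameCycle.setoid σ)) := Fintype.ofFinite _
  have e1 : {f : α → Bool // (∀ z, f (σ z) = f z) ∧ f x = f y} ≃
      {g : Quotient (Equiv.Perm.SameCycle.setoid σ) → Bool //
        g (Quotient.mk _ x) = g (Quotient.mk _ y)} :=
    { toFun := fun f => ⟨invFunEquiv σ Bool ⟨f.1, f.2.1⟩, by
        rw [invFunEquiv_apply, invFunEquiv_apply]
        exact f.2.2⟩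
      invFun := fun g => ⟨fun a => g.1 (Quotient.mk _ a),
        ⟨fun z => congrArg g.1 (Quotient.sound ⟨-1, by simp⟩), g.2⟩⟩
      left_inv := fun f => rfl
      right_inv := fun g => by
        refine Subtype.ext ?_
        funext q
        induction q using Quotient.ind
        rfl }
  have h1 : (2:ℕ) ^ (ncyc σ - 1) ≤
      Nat.card {f : α → Bool // (∀ z, f (σ z) = f z) ∧ f x = f y} := by
    rw [Nat.card_congr e1]
    have := lower_bound_card (γ := Bool) (Quotient.mk (Equiv.Perm.SameCycle.setoid σ) x)
      (Quotient.mk (Equiv.Perm.SameCycle.setoid σ) y)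
    rw [Fintype.card_bool] at this
    rwa [← Nat.card_eq_fintype_card, card_quot σ, ← ncyc] at this
  have h2 : Nat.card {f : α → Bool // (∀ z, f (σ z) = f z) ∧ f x = f y} ≤
      Nat.card {f : α → Bool // ∀ z, f (τ z) = f z} := by
    refine Nat.card_le_card_of_injective
      (fun f => ⟨f.1, inv_mul_swap f.2.1 f.2.2⟩) ?_
    intro f1 f2 hf
    have hv := congrArg
      (fun g : {f : α → Bool // ∀ z, f (τ z) = f z} => (g : α → Bool)) hf
    exact Subtype.ext hv
  have h2' : Nat.card {f : α → Bool // ∀ z, f (τ z) = f z} = 2 ^ ncyc τ := by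
    have := card_invFun τ Bool
    rwa [Fintype.card_bool] at this
  have hcomb := le_trans h1 (h2.trans_eq h2')
  have hle := (Nat.pow_le_pow_iff_right (by norm_num : 1 < 2)).1 hcomb
  exact Nat.le_add_of_sub_le hle

lemma ncyc_mul_swap (σ : Equiv.Perm α) {x y : α} (hxy : x ≠ y) :
    ncyc (σ * Equiv.swap x y) = ncyc σ + 1 ∨ ncyc σ = ncyc (σ * Equiv.swap x y) + 1 := by
  have h1 := ncyc_le_mul_swap σ hxy
  have h2 := ncyc_le_mul_swap (σ * Equiv.swap x y) hxy
  rw [mul_assoc, Equiv.swap_mul_self, mul_one] at h2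
  have h3 := ncyc_ne_mul_swap σ hxy
  omega

end Orbits

section GramSec

lemma cyc_eq_ncyc {k : ℕ} (π : Equiv.Perm (Fin k)) : cyc π = ncyc π := by
  simp [cyc, ncyc]

/-- The indicator-vector matrix whose rows have Gram matrix `Gram k q`. -/
noncomputable def vmat (k q : ℕ) :
    Matrix (Equiv.Perm (Fin k)) ((Fin k → Fin q) × (Fin k → Fin q)) ℝ :=
  Matrix.of fun σ p => if p.2 = p.1 ∘ σ then 1 else 0

lemma comp_iff_inv {k q : ℕ} (σ τ : Equiv.Perm (Fin k)) (i : Fin k → Fin q) :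
    (i ∘ σ = i ∘ τ) ↔ ∀ z, i ((σ * τ⁻¹) z) = i z := by
  constructor
  · intro h z
    have := congrFun h (τ⁻¹ z)
    simpa [Equiv.Perm.mul_apply] using this
  · intro h
    funext z
    have := h (τ z)
    simpa [Equiv.Perm.mul_apply] using this

lemma gram_eq_vmat (k q : ℕ) : Gram k q = vmat k q * (vmat k q)ᵀ := by
  classical
  ext σ τ
  rw [Matrix.mul_apply, Fintype.sum_prod_type]
  have hinner : ∀ i : Fin k → Fin q,
      (∑ j : Fin k → Fin q, vmat k q σ (i, j) * (vmat k q)ᵀ (i, j) τ) =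
        if i ∘ σ = i ∘ τ then (1:ℝ) else 0 := by
    intro i
    simp only [vmat, Matrix.transpose_apply, Matrix.of_apply, ite_mul, one_mul, zero_mul]
    rw [Finset.sum_ite_eq' Finset.univ (i ∘ σ) (fun j => if j = i ∘ τ then (1:ℝ) else 0)]
    simp only [Finset.mem_univ, if_true]
  rw [Finset.sum_congr rfl (fun i _ => hinner i)]
  rw [Finset.sum_boole]
  have hcard : (Finset.univ.filter fun i : Fin k → Fin q => i ∘ σ = i ∘ τ).card
      = q ^ cyc (σ * τ⁻¹) := by
    rw [← Fintype.card_subtype]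
    have e : {i : Fin k → Fin q // i ∘ σ = i ∘ τ} ≃
        {i : Fin k → Fin q // ∀ z, i ((σ * τ⁻¹) z) = i z} :=
      Equiv.subtypeEquivRight (fun i => comp_iff_inv σ τ i)
    rw [← Nat.card_eq_fintype_card, Nat.card_congr e, card_invFun (σ * τ⁻¹) (Fin q),
      Fintype.card_fin, cyc_eq_ncyc]
  rw [hcard]
  show Gram k q σ τ = ((q ^ cyc (σ * τ⁻¹) : ℕ) : ℝ)
  simp only [Gram, Matrix.of_apply]
  push_cast
  rfl

lemma gram_isUnit {k q : ℕ} (hkq : k ≤ q) : IsUnit (Gram k q) := by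
  classical
  rw [← Matrix.mulVec_injective_iff_isUnit]
  have hker : ∀ c : Equiv.Perm (Fin k) → ℝ, Matrix.mulVec (Gram k q) c = 0 → c = 0 := by
    intro c hc
    set u := Matrix.vecMul c (vmat k q) with hu
    have h0 : dotProduct c (Matrix.mulVec (Gram k q) c) = 0 := by
      rw [hc, dotProduct_zero]
    rw [gram_eq_vmat] at h0
    have h1 : dotProduct c (Matrix.mulVec (vmat k q * (vmat k q)ᵀ) c) =
        dotProduct u u := by
      rw [Matrix.dotProduct_mulVec, ← Matrix.vecMul_vecMul, ← hu, Matrix.vecMul_transpose,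
        dotProduct_comm, Matrix.dotProduct_mulVec, ← hu]
    rw [h1] at h0
    have hup : ∀ p, u p = 0 := by
      have hsum : ∑ p, u p * u p = 0 := h0
      intro p
      have := (Finset.sum_eq_zero_iff_of_nonneg
        (fun p _ => mul_self_nonneg (u p))).1 hsum p (Finset.mem_univ p)
      exact mul_self_eq_zero.1 this
    funext τ
    have hi : Function.Injective (fun z : Fin k => Fin.castLE hkq z) :=
      fun a b hab => by simpa [Fin.ext_iff] using hab
    set i : Fin k → Fin q := fun z => Fin.castLE hkq z with hidef
    have := hup (i, i ∘ τ)
    rw [hu, Matrix.vecMul, dotProduct] at this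
    have hterm : ∀ σ : Equiv.Perm (Fin k),
        c σ * vmat k q σ (i, i ∘ τ) = if σ = τ then c σ else 0 := by
      intro σ
      simp only [vmat, Matrix.of_apply]
      by_cases h : σ = τ
      · subst h
        simp
      · rw [if_neg, if_neg h, mul_zero]
        intro hcomp
        refine h ?_
        ext z
        have h2 := congrFun hcomp z
        exact congrArg Fin.val (hi h2).symm
    rw [Finset.sum_congr rfl (fun σ _ => hterm σ)] at this
    rw [Finset.sum_ite_eq' Finset.univ τ c] at this
    simpa using this
  intro c1 c2 h12
  have := hker (c1 - c2) (by rw [Matrix.mulVec_sub, h12, sub_self])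
  exact sub_eq_zero.1 this

end GramSec
section Mult
open Polynomial

lemma charpoly_rootMultiplicity_ge {n : Type*} [Fintype n] [DecidableEq n]
    (A : Matrix n n ℝ) (μ : ℝ) {ι : Type*} [Fintype ι] (v : ι → n → ℝ)
    (hli : LinearIndependent ℝ v) (hev : ∀ i, A.mulVec (v i) = μ • v i) :
    Fintype.card ι ≤ A.charpoly.rootMultiplicity μ := by
  classical
  rw [Polynomial.le_rootMultiplicity_iff (A.charpoly_monic.ne_zero)]
  have hs := hli.linearIndepOn_id
  set t := hs.extend (Set.subset_univ (Set.range v)) with htdef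
  have hsub : Set.range v ⊆ t := hs.subset_extend _
  set e : (ι ⊕ ↥(t \ Set.range v)) ≃ ↥t :=
    (Equiv.sumCongr (Equiv.ofInjective v hli.injective) (Equiv.refl _)).trans
      (Equiv.Set.sumDiffSubset hsub) with hedef
  set b : Module.Basis (ι ⊕ ↥(t \ Set.range v)) ℝ (n → ℝ) := (Module.Basis.extend hs).reindex e.symm
    with hbdef
  have hb : ∀ i : ι, b (Sum.inl i) = v i := by
    intro i
    rw [hbdef, Module.Basis.reindex_apply, Equiv.symm_symm]
    have he : e (Sum.inl i) = Set.inclusion hsub (Equiv.ofInjective v hli.injective i) := by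
      rw [hedef, Equiv.trans_apply, Equiv.sumCongr_apply, Sum.map_inl,
        Equiv.Set.sumDiffSubset_apply_inl]
    rw [he, Module.Basis.extend_apply_self, Set.coe_inclusion]
    simp
  haveI hfin0 : Finite (ι ⊕ ↥(t \ Set.range v)) := by
    haveI := FiniteDimensional.fintypeBasisIndex b
    exact Finite.of_fintype _
  haveI : Finite ↥(t \ Set.range v) :=
    Finite.of_injective (Sum.inr : _ → ι ⊕ ↥(t \ Set.range v)) Sum.inr_injective
  haveI : Fintype ↥(t \ Set.range v) := Fintype.ofFinite _
  set f := Matrix.toLin (Pi.basisFun ℝ n) (Pi.basisFun ℝ n) A with hfdef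
  have hf_apply : ∀ x, f x = A.mulVec x := by
    intro x
    rw [hfdef, Matrix.toLin_eq_toLin', Matrix.toLin'_apply]
  have hcp : A.charpoly = (LinearMap.toMatrix b b f).charpoly := by
    rw [LinearMap.charpoly_toMatrix]
    conv_lhs => rw [← LinearMap.toMatrix_toLin (Pi.basisFun ℝ n) (Pi.basisFun ℝ n) A]
    rw [LinearMap.charpoly_toMatrix]
  set M := LinearMap.toMatrix b b f with hMdef
  have hMcol : ∀ (j : ι) (x : ι ⊕ ↥(t \ Set.range v)),
      M x (Sum.inl j) = if x = Sum.inl j then μ else 0 := by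
    intro j x
    have hfb : f (b (Sum.inl j)) = μ • b (Sum.inl j) := by
      rw [hb j, hf_apply, hev j]
    rw [hMdef, LinearMap.toMatrix_apply, hfb, _root_.map_smul, Finsupp.smul_apply,
      Module.Basis.repr_self, smul_eq_mul, Finsupp.single_apply]
    by_cases h : x = Sum.inl j
    · rw [if_pos h, if_pos h.symm, mul_one]
    · rw [if_neg h, if_neg (fun hh => h hh.symm), mul_zero]
  have hblocks : M = Matrix.fromBlocks (Matrix.diagonal fun _ : ι => μ) (M.toBlocks₁₂)
      0 (M.toBlocks₂₂) := by
    ext x y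
    rcases x with x | x <;> rcases y with y | y
    · rw [hMcol y (Sum.inl x)]
      simp [Matrix.diagonal]
    · rfl
    · rw [hMcol y (Sum.inr x)]
      simp
    · rfl
  have hdiag : (Matrix.diagonal fun _ : ι => μ).charpoly = (X - C μ) ^ Fintype.card ι := by
    have hch : Matrix.charmatrix (Matrix.diagonal fun _ : ι => μ) =
        Matrix.diagonal (fun _ : ι => (X : ℝ[X]) - C μ) := by
      ext i j
      by_cases h : i = j
      · subst h
        rw [Matrix.charmatrix_apply_eq, Matrix.diagonal_apply_eq, Matrix.diagonal_apply_eq]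
      · rw [Matrix.charmatrix_apply_ne _ _ _ h, Matrix.diagonal_apply_ne _ h,
          Matrix.diagonal_apply_ne _ h, map_zero, neg_zero]
    rw [Matrix.charpoly, hch, Matrix.det_diagonal, Finset.prod_const, Finset.card_univ]
  rw [hcp, hblocks, Matrix.charpoly_fromBlocks_zero₂₁, hdiag]
  exact dvd_mul_right _ _

end Mult

section Eigen
open Polynomial

/-- Diagonal factor `d^{#σ}`. -/
noncomputable def DdM (k d : ℕ) : Matrix (Equiv.Perm (Fin k)) (Equiv.Perm (Fin k)) ℝ :=
  Matrix.diagonal (fun σ => (d : ℝ) ^ cyc σ)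

/-- Right factor `D^{#(σθ⁻¹)}`. -/
noncomputable def BM (k D : ℕ) : Matrix (Equiv.Perm (Fin k)) (Equiv.Perm (Fin k)) ℝ :=
  Matrix.of fun σ θ => (D : ℝ) ^ cyc (σ * θ⁻¹)

lemma cyc_inv_pair {k : ℕ} (σ τ : Equiv.Perm (Fin k)) : cyc (τ * σ⁻¹) = cyc (σ * τ⁻¹) := by
  rw [cyc, cyc]
  have h : τ * σ⁻¹ = (σ * τ⁻¹)⁻¹ := by
    rw [_root_.mul_inv_rev, inv_inv]
  rw [h, Equiv.Perm.cycleType_inv]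

lemma gram_symm (k q : ℕ) : (Gram k q)ᵀ = Gram k q := by
  ext σ τ
  simp only [Matrix.transpose_apply, Gram, Matrix.of_apply]
  rw [cyc_inv_pair]

lemma gram_inv_symm (k q : ℕ) : ((Gram k q)⁻¹)ᵀ = (Gram k q)⁻¹ := by
  rw [Matrix.transpose_nonsing_inv, gram_symm]

lemma ck_eq (k d D : ℕ) : Ck k d D = (Gram k (d * D))⁻¹ * (DdM k d * BM k D) := by
  ext τ θ
  rw [Matrix.mul_apply]
  show (∑ σ : Equiv.Perm (Fin k),
      WgM k (d * D) σ τ * (d : ℝ) ^ cyc σ * (D : ℝ) ^ cyc (σ * θ⁻¹)) = _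
  refine Finset.sum_congr rfl (fun σ _ => ?_)
  have hsymm : WgM k (d * D) σ τ = (Gram k (d * D))⁻¹ τ σ := by
    rw [WgM]
    conv_rhs => rw [← gram_inv_symm]
    rfl
  rw [hsymm, DdM, Matrix.diagonal_mul, mul_assoc]
  rfl

/-- Candidate eigenvector attached to a transposition `t`. -/
noncomputable def evec (k d D : ℕ) (t : Equiv.Perm (Fin k)) : Equiv.Perm (Fin k) → ℝ :=
  fun θ => (-((D : ℝ) * ((d : ℝ) + 1))) * (if θ = 1 then 1 else 0) +
    ((d : ℝ) * (D : ℝ) ^ 2 + 1) * (if θ = t then 1 else 0)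

lemma sum_pick {ι : Type*} [Fintype ι] [DecidableEq ι] (g : ι → ℝ) (a b : ℝ) (t1 t2 : ι) :
    (∑ θ : ι, g θ * (a * (if θ = t1 then 1 else 0) + b * (if θ = t2 then 1 else 0))) =
      a * g t1 + b * g t2 := by
  have hone : ∀ t : ι, (∑ θ : ι, g θ * (if θ = t then 1 else 0)) = g t := by
    intro t
    rw [Finset.sum_congr rfl (fun θ _ => by
      rw [mul_ite, mul_one, mul_zero] :
        ∀ θ ∈ Finset.univ, g θ * (if θ = t then 1 else 0) = if θ = t then g θ else 0)]
    rw [Finset.sum_ite_eq' Finset.univ t g]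
    simp
  calc (∑ θ : ι, g θ * (a * (if θ = t1 then 1 else 0) + b * (if θ = t2 then 1 else 0)))
      = ∑ θ : ι, (a * (g θ * (if θ = t1 then 1 else 0)) +
          b * (g θ * (if θ = t2 then 1 else 0))) := Finset.sum_congr rfl (fun θ _ => by ring)
    _ = a * (∑ θ : ι, g θ * (if θ = t1 then 1 else 0)) +
        b * (∑ θ : ι, g θ * (if θ = t2 then 1 else 0)) := by
          rw [Finset.sum_add_distrib, ← Finset.mul_sum, ← Finset.mul_sum]
    _ = a * g t1 + b * g t2 := by rw [hone, hone]

lemma key_identity {d D : ℝ} (hden : d ^ 2 * D ^ 2 - 1 ≠ 0) {nσ mσ : ℕ}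
    (hcase : mσ = nσ + 1 ∨ nσ = mσ + 1) :
    d ^ nσ * ((-(D * (d + 1))) * D ^ nσ + (d * D ^ 2 + 1) * D ^ mσ) =
      ((d * D ^ 2 - d) / (d ^ 2 * D ^ 2 - 1)) *
        ((-(D * (d + 1))) * (d * D) ^ nσ + (d * D ^ 2 + 1) * (d * D) ^ mσ) := by
  rcases hcase with h | h
  · subst h
    rw [div_mul_eq_mul_div, eq_div_iff hden]
    ring
  · subst h
    rw [div_mul_eq_mul_div, eq_div_iff hden]
    ring

end Eigen

section Eigen2
open Polynomial

noncomputable instance {k : ℕ} : DecidablePred (Equiv.Perm.IsSwap : Equiv.Perm (Fin k) → Prop) :=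
  fun t => decidable_of_iff (t.support.card = 2) Equiv.Perm.card_support_eq_two

lemma mulVec_eigen {k d D : ℕ} (hk : 2 ≤ k) (hkdD : k ≤ d * D) {t : Equiv.Perm (Fin k)}
    (ht : t.IsSwap) :
    (DdM k d * BM k D) *ᵥ evec k d D t =
      (((d : ℝ) * (D : ℝ) ^ 2 - d) / ((d : ℝ) ^ 2 * (D : ℝ) ^ 2 - 1)) •
        ((Gram k (d * D)) *ᵥ evec k d D t) := by
  classical
  obtain ⟨x, y, hxy, rfl⟩ := ht
  have hden : (d : ℝ) ^ 2 * (D : ℝ) ^ 2 - 1 ≠ 0 := by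
    have h2 : (2 : ℝ) ≤ (d : ℝ) * D := by
      have h2' : (2 : ℕ) ≤ d * D := le_trans hk hkdD
      exact_mod_cast h2'
    nlinarith
  funext σ
  have hL : ∀ θ, (DdM k d * BM k D) σ θ =
      ((d : ℝ) ^ cyc σ * (D : ℝ) ^ cyc (σ * θ⁻¹)) := by
    intro θ
    rw [DdM, Matrix.diagonal_mul]
    rfl
  have hG : ∀ θ, Gram k (d * D) σ θ = ((d : ℝ) * (D : ℝ)) ^ cyc (σ * θ⁻¹) := by
    intro θ
    simp only [Gram, Matrix.of_apply]
    push_cast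
    rfl
  simp only [Matrix.mulVec, dotProduct, Pi.smul_apply]
  have hLsum : (∑ θ : Equiv.Perm (Fin k),
      (DdM k d * BM k D) σ θ * evec k d D (Equiv.swap x y) θ) =
      (-((D : ℝ) * ((d : ℝ) + 1))) *
          ((d : ℝ) ^ cyc σ * (D : ℝ) ^ cyc (σ * (1 : Equiv.Perm (Fin k))⁻¹)) +
        ((d : ℝ) * (D : ℝ) ^ 2 + 1) *
          ((d : ℝ) ^ cyc σ * (D : ℝ) ^ cyc (σ * (Equiv.swap x y)⁻¹)) := by
    rw [Finset.sum_congr rfl (fun θ _ => by rw [hL θ])]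
    exact sum_pick (fun θ => (d : ℝ) ^ cyc σ * (D : ℝ) ^ cyc (σ * θ⁻¹)) _ _ 1 (Equiv.swap x y)
  have hGsum : (∑ θ : Equiv.Perm (Fin k),
      Gram k (d * D) σ θ * evec k d D (Equiv.swap x y) θ) =
      (-((D : ℝ) * ((d : ℝ) + 1))) *
          ((d : ℝ) * (D : ℝ)) ^ cyc (σ * (1 : Equiv.Perm (Fin k))⁻¹) +
        ((d : ℝ) * (D : ℝ) ^ 2 + 1) *
          ((d : ℝ) * (D : ℝ)) ^ cyc (σ * (Equiv.swap x y)⁻¹) := by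
    rw [Finset.sum_congr rfl (fun θ _ => by rw [hG θ])]
    exact sum_pick (fun θ => ((d : ℝ) * (D : ℝ)) ^ cyc (σ * θ⁻¹)) _ _ 1 (Equiv.swap x y)
  rw [hLsum, hGsum]
  rw [inv_one, mul_one, Equiv.swap_inv]
  have hcase : cyc (σ * Equiv.swap x y) = cyc σ + 1 ∨ cyc σ = cyc (σ * Equiv.swap x y) + 1 := by
    have h := ncyc_mul_swap σ hxy
    rwa [← cyc_eq_ncyc, ← cyc_eq_ncyc] at h
  have hkey := key_identity (d := (d : ℝ)) (D := (D : ℝ)) hden hcase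
  rw [smul_eq_mul]
  linear_combination hkey

lemma ck_eigen {k d D : ℕ} (hk : 2 ≤ k) (hkdD : k ≤ d * D) {t : Equiv.Perm (Fin k)}
    (ht : t.IsSwap) :
    (Ck k d D) *ᵥ evec k d D t =
      (((d : ℝ) * (D : ℝ) ^ 2 - d) / ((d : ℝ) ^ 2 * (D : ℝ) ^ 2 - 1)) • evec k d D t := by
  have hG := gram_isUnit (k := k) (q := d * D) hkdD
  have hdet := (Matrix.isUnit_iff_isUnit_det _).1 hG
  rw [ck_eq, ← Matrix.mulVec_mulVec, mulVec_eigen hk hkdD ht, Matrix.mulVec_smul,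
    Matrix.mulVec_mulVec, Matrix.nonsing_inv_mul _ hdet, Matrix.one_mulVec]

lemma evec_li {k d D : ℕ} (hD : 0 < D) :
    LinearIndependent ℝ (fun t : {t : Equiv.Perm (Fin k) // t.IsSwap} => evec k d D t.1) := by
  classical
  rw [Fintype.linearIndependent_iff]
  intro g hg t0
  have hb : (0 : ℝ) < (d : ℝ) * (D : ℝ) ^ 2 + 1 := by positivity
  have ht0ne : t0.1 ≠ 1 := by
    obtain ⟨x, y, hxy, ht⟩ := t0.2
    rw [ht]
    intro h
    exact hxy (Equiv.swap_eq_one_iff.1 h)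
  have heval := congrFun hg t0.1
  rw [Finset.sum_apply] at heval
  have hterm : ∀ t : {t : Equiv.Perm (Fin k) // t.IsSwap},
      (g t • evec k d D t.1) t0.1 =
        if t = t0 then g t * ((d : ℝ) * (D : ℝ) ^ 2 + 1) else 0 := by
    intro t
    rw [Pi.smul_apply, smul_eq_mul]
    show g t * ((-((D : ℝ) * ((d : ℝ) + 1))) * (if t0.1 = 1 then 1 else 0) +
      ((d : ℝ) * (D : ℝ) ^ 2 + 1) * (if t0.1 = t.1 then 1 else 0)) = _
    rw [if_neg ht0ne, mul_zero, zero_add]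
    by_cases h : t = t0
    · subst h
      rw [if_pos rfl, if_pos rfl, mul_one]
    · rw [if_neg (fun hh => h (Subtype.ext hh.symm)), mul_zero, mul_zero, if_neg h]
  rw [Finset.sum_congr rfl (fun t _ => hterm t), Finset.sum_ite_eq' Finset.univ t0
    (fun t => g t * ((d : ℝ) * (D : ℝ) ^ 2 + 1))] at heval
  simp only [Finset.mem_univ, if_true, Pi.zero_apply] at heval
  exact (mul_eq_zero.1 heval).resolve_right (ne_of_gt hb)

lemma card_swaps {k : ℕ} :
    Fintype.card {t : Equiv.Perm (Fin k) // t.IsSwap} = k.choose 2 := by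
  classical
  have e : {t : Equiv.Perm (Fin k) // t.IsSwap} ≃ {s : Finset (Fin k) // s.card = 2} := by
    refine Equiv.ofBijective (fun t => ⟨t.1.support, Equiv.Perm.card_support_eq_two.2 t.2⟩)
      ⟨?_, ?_⟩
    · rintro ⟨t1, ht1⟩ ⟨t2, ht2⟩ h12
      have hsupp : t1.support = t2.support := congrArg Subtype.val h12
      obtain ⟨x, y, hxy, rfl⟩ := ht1
      obtain ⟨u, v, huv, rfl⟩ := ht2
      rw [Equiv.Perm.support_swap hxy, Equiv.Perm.support_swap huv] at hsupp
      refine Subtype.ext ?_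
      have hx : x = u ∨ x = v := by
        have : x ∈ ({u, v} : Finset (Fin k)) := by
          rw [← hsupp]
          simp
        simpa using this
      have hy : y = u ∨ y = v := by
        have : y ∈ ({u, v} : Finset (Fin k)) := by
          rw [← hsupp]
          simp
        simpa using this
      have hu : u = x ∨ u = y := by
        have : u ∈ ({x, y} : Finset (Fin k)) := by
          rw [hsupp]
          simp
        simpa using this
      rcases hx with rfl | rfl
      · rcases hy with rfl | rfl
        · exact absurd rfl hxy
        · rfl
      · rcases hy with rfl | rfl
        · exact Equiv.swap_comm _ _
        · exact absurd rfl hxy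
    · rintro ⟨s, hs⟩
      obtain ⟨a, b, hab, rfl⟩ := Finset.card_eq_two.1 hs
      exact ⟨⟨Equiv.swap a b, ⟨a, b, hab, rfl⟩⟩, Subtype.ext (Equiv.Perm.support_swap hab)⟩
  rw [Fintype.card_congr e]
  simpa using Fintype.card_finset_len (α := Fin k) 2

end Eigen2

/-- `μ₂ = (dD² − d)/(d²D² − 1)` is an eigenvalue of `C_k` whose algebraic multiplicity is at
least `k(k−1)/2 = (k choose 2)`, the number of transpositions in `S_k`. -/
theorem Ck_mu2_eigenvalue (k d D : ℕ) (hk : 2 ≤ k) (hd : 0 < d) (hD : 0 < D)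
    (hkdD : k ≤ d * D) :
    (Ck k d D).charpoly.IsRoot (((d : ℝ) * D ^ 2 - d) / ((d : ℝ) ^ 2 * D ^ 2 - 1)) ∧
    k.choose 2 ≤ (Ck k d D).charpoly.rootMultiplicity
      (((d : ℝ) * D ^ 2 - d) / ((d : ℝ) ^ 2 * D ^ 2 - 1)) := by
  classical
  have hli := evec_li (k := k) (d := d) (D := D) hD
  have hev : ∀ t : {t : Equiv.Perm (Fin k) // t.IsSwap},
      (Ck k d D).mulVec (evec k d D t.1) =
        (((d : ℝ) * (D : ℝ) ^ 2 - d) / ((d : ℝ) ^ 2 * (D : ℝ) ^ 2 - 1)) • evec k d D t.1 :=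
    fun t => ck_eigen hk hkdD t.2
  have hmult := charpoly_rootMultiplicity_ge (Ck k d D) _ _ hli hev
  rw [card_swaps] at hmult
  refine ⟨?_, hmult⟩
  have hpos : 0 < k.choose 2 := Nat.choose_pos hk
  have hlt := lt_of_lt_of_le hpos hmult
  exact (Polynomial.rootMultiplicity_pos ((Ck k d D).charpoly_monic.ne_zero)).1 hlt
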